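/- Let p ≥ 2 be an integer. If χ < C_p and α ≤ 0, then F^p_{m,α} has no critical point in R^p. -/

import Mathlib

open scoped BigOperators
noncomputable section

/-- Internal (diffusion) part: sum of (X_{i+1} - X_i)^(1-m) over consecutive gaps. -/
def gapSum (m : ℝ) (p : ℕ) (X : EuclideanSpace ℝ (Fin p)) : ℝ :=
  ∑ i : Fin p, if h : (i : ℕ) + 1 < p then (X ⟨(i : ℕ) + 1, h⟩ - X i) ^ (1 - m) else 0

/-- Interaction part: sum of |X_i - X_j|^(1-m) over ordered pairs i ≠ j. -/
def pairSum (m : ℝ) (p : ℕ) (X : EuclideanSpace ℝ (Fin p)) : ℝ :=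
  ∑ i : Fin p, ∑ j : Fin p, if i ≠ j then |X i - X j| ^ (1 - m) else 0

/-- The discrete free energy F^p_m. -/
def FF (m χ : ℝ) (p : ℕ) (X : EuclideanSpace ℝ (Fin p)) : ℝ :=
  (m - 1)⁻¹ * gapSum m p X - (χ / (m - 1)) * pairSum m p X

/-- Membership in R^p: strictly increasing with zero mean. -/
def memR (p : ℕ) (X : EuclideanSpace ℝ (Fin p)) : Prop :=
  (StrictMono fun i => X i) ∧ ∑ i, X i = 0

/-- The critical constant C_p, with 1/C_p the sup of the HLS ratio. -/
def Cp (m : ℝ) (p : ℕ) : ℝ :=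
  (sSup {r : ℝ | ∃ X : EuclideanSpace ℝ (Fin p), memR p X ∧
    r = pairSum m p X / gapSum m p X})⁻¹

/-- The functional F^p_{m,α} with confining quadratic potential. -/
def FFa (m χ α : ℝ) (p : ℕ) (X : EuclideanSpace ℝ (Fin p)) : ℝ :=
  FF m χ p X + α / 2 * ‖X‖ ^ 2

/-- H^N_{m+1}(Y) = |∇F^N_m(Y)|² − ((m−1) F^N_m(Y))². -/
def Hfun (m χ : ℝ) (N : ℕ) (Y : EuclideanSpace ℝ (Fin N)) : ℝ :=
  ‖gradient (FF m χ N) Y‖ ^ 2 - ((m - 1) * FF m χ N Y) ^ 2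

/-- X : [0,T) → R^N is a solution of the gradient flow of F^N_m. -/
def isGFlow (m χ : ℝ) (N : ℕ) (T : ℝ) (X : ℝ → EuclideanSpace ℝ (Fin N)) : Prop :=
  ∀ t ∈ Set.Ico (0 : ℝ) T, memR N (X t) ∧
    HasDerivWithinAt X (-(gradient (FF m χ N) (X t))) (Set.Ico (0 : ℝ) T) t

/-- The gap Y_{i+1} - Y_i (0 if i+1 is out of range). -/
def gapAt (N : ℕ) (Y : EuclideanSpace ℝ (Fin N)) (i : ℕ) : ℝ :=
  if h : i + 1 < N then Y ⟨i + 1, h⟩ - Y ⟨i, Nat.lt_of_succ_lt h⟩ else 0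

theorem stmt4 (m χ : ℝ) (hm : 1 < m) (hχ : 0 < χ) (p : ℕ) (hp : 2 ≤ p)
    (α : ℝ) (hα : α ≤ 0) (hlt : χ < Cp m p) :
    ¬ ∃ V : EuclideanSpace ℝ (Fin p), memR p V ∧ gradient (FFa m χ α p) V = 0 := by
  rintro ⟨V, hV, hgrad⟩
  obtain ⟨hmono, hsum⟩ := hV
  have hm1 : (0:ℝ) < m - 1 := by linarith
  have hgap : ∀ (i : Fin p) (h : (i : ℕ) + 1 < p), 0 < V ⟨(i : ℕ) + 1, h⟩ - V i := by
    intro i h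
    have : i < (⟨(i : ℕ) + 1, h⟩ : Fin p) := by simp [Fin.lt_def]
    exact sub_pos.mpr (hmono this)
  have hG : 0 < gapSum m p V := by
    unfold gapSum
    apply Finset.sum_pos'
    · intro i _
      by_cases h : (i : ℕ) + 1 < p
      · simp only [dif_pos h]
        exact (Real.rpow_pos_of_pos (hgap i h) _).le
      · simp [h]
    · refine ⟨⟨0, by omega⟩, Finset.mem_univ _, ?_⟩
      have h : (((⟨0, by omega⟩ : Fin p) : ℕ)) + 1 < p := by show 0 + 1 < p; omega
      simp only [dif_pos h]
      exact Real.rpow_pos_of_pos (hgap _ h) _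
  have hP : 0 ≤ pairSum m p V := by
    unfold pairSum
    apply Finset.sum_nonneg; intro i _
    apply Finset.sum_nonneg; intro j _
    by_cases h : i ≠ j
    · simp only [if_pos h]
      exact Real.rpow_nonneg (abs_nonneg _) _
    · simp [h]
  -- from χ < Cp : χ * pairSum < gapSum
  have hsup : 0 < sSup {r : ℝ | ∃ X : EuclideanSpace ℝ (Fin p), memR p X ∧
      r = pairSum m p X / gapSum m p X} := by
    by_contra h
    push_neg at h
    have : Cp m p ≤ 0 := by rw [Cp]; exact inv_nonpos.mpr h
    linarith
  have hbdd : BddAbove {r : ℝ | ∃ X : EuclideanSpace ℝ (Fin p), memR p X ∧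
      r = pairSum m p X / gapSum m p X} := by
    by_contra h
    rw [Real.sSup_of_not_bddAbove h] at hsup
    exact lt_irrefl _ hsup
  have hr : pairSum m p V / gapSum m p V ≤ sSup {r : ℝ | ∃ X : EuclideanSpace ℝ (Fin p),
      memR p X ∧ r = pairSum m p X / gapSum m p X} :=
    le_csSup hbdd ⟨V, ⟨hmono, hsum⟩, rfl⟩
  have hcs : χ < (sSup {r : ℝ | ∃ X : EuclideanSpace ℝ (Fin p), memR p X ∧
      r = pairSum m p X / gapSum m p X})⁻¹ := hlt
  have hχs : χ * sSup {r : ℝ | ∃ X : EuclideanSpace ℝ (Fin p), memR p X ∧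
      r = pairSum m p X / gapSum m p X} < 1 := by
    have h1 := mul_lt_mul_of_pos_right hcs hsup
    rwa [inv_mul_cancel₀ hsup.ne'] at h1
  have hPle : pairSum m p V ≤ sSup {r : ℝ | ∃ X : EuclideanSpace ℝ (Fin p), memR p X ∧
      r = pairSum m p X / gapSum m p X} * gapSum m p V := by
    have := mul_le_mul_of_nonneg_right hr hG.le
    rwa [div_mul_cancel₀ _ hG.ne'] at this
  have hkey : χ * pairSum m p V < gapSum m p V := by nlinarith
  have hFF : 0 < FF m χ p V := by
    have hEq : FF m χ p V = (m - 1)⁻¹ * (gapSum m p V - χ * pairSum m p V) := by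
      unfold FF; rw [div_eq_mul_inv]; ring
    rw [hEq]
    exact mul_pos (inv_pos.mpr hm1) (by linarith)
  -- differentiability
  have hproj : ∀ i : Fin p, DifferentiableAt ℝ (fun X : EuclideanSpace ℝ (Fin p) => X i) V :=
    fun i => (EuclideanSpace.proj (𝕜 := ℝ) i).differentiableAt
  have hdgap : DifferentiableAt ℝ (gapSum m p) V := by
    unfold gapSum
    apply DifferentiableAt.fun_sum
    intro i _
    by_cases h : (i : ℕ) + 1 < p
    · simp only [dif_pos h]
      exact ((hproj ⟨(i : ℕ) + 1, h⟩).sub (hproj i)).rpow_const (Or.inl (hgap i h).ne')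
    · simp only [dif_neg h]
      exact differentiableAt_const 0
  have hdpair : DifferentiableAt ℝ (pairSum m p) V := by
    unfold pairSum
    apply DifferentiableAt.fun_sum
    intro i _
    apply DifferentiableAt.fun_sum
    intro j _
    by_cases h : i ≠ j
    · simp only [if_pos h]
      have hne : V i - V j ≠ 0 := sub_ne_zero.mpr fun hh => h (hmono.injective hh)
      have hsub : DifferentiableAt ℝ (fun X : EuclideanSpace ℝ (Fin p) => X i - X j) V :=
        (hproj i).sub (hproj j)
      have habs : DifferentiableAt ℝ (fun X : EuclideanSpace ℝ (Fin p) => |X i - X j|) V :=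
        hsub.abs hne
      exact habs.rpow_const (Or.inl (abs_ne_zero.mpr hne))
    · simp only [if_neg h]
      exact differentiableAt_const 0
  have hdnorm : DifferentiableAt ℝ (fun X : EuclideanSpace ℝ (Fin p) => ‖X‖ ^ 2) V :=
    ((contDiff_norm_sq ℝ (n := 1)).differentiable one_ne_zero).differentiableAt
  have hdiff : DifferentiableAt ℝ (FFa m χ α p) V := by
    unfold FFa FF
    exact ((hdgap.const_mul _).sub (hdpair.const_mul _)).add (hdnorm.const_mul _)
  have hfd : fderiv ℝ (FFa m χ α p) V = 0 := by
    have h2 := congrArg (InnerProductSpace.toDual ℝ (EuclideanSpace ℝ (Fin p))) hgrad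
    simpa [gradient] using h2
  have hHF : HasFDerivAt (FFa m χ α p) (0 : EuclideanSpace ℝ (Fin p) →L[ℝ] ℝ) V := by
    rw [← hfd]; exact hdiff.hasFDerivAt
  -- derivative of t ↦ FFa (t • V) at t = 1, two ways
  have h1 : HasDerivAt (fun t : ℝ => FFa m χ α p (t • V)) 0 1 := by
    have hs : HasDerivAt (fun t : ℝ => t • V) V 1 := by
      simpa using (hasDerivAt_id (1:ℝ)).smul_const V
    have hHF' : HasFDerivAt (FFa m χ α p) (0 : EuclideanSpace ℝ (Fin p) →L[ℝ] ℝ)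
        ((1:ℝ) • V) := by rwa [one_smul]
    have h := hHF'.comp_hasDerivAt 1 hs
    simp only [ContinuousLinearMap.zero_apply] at h
    exact h
  have heq : ∀ t ∈ Set.Ioi (0:ℝ), FFa m χ α p (t • V)
      = t ^ (1 - m) * FF m χ p V + t ^ 2 * (α / 2 * ‖V‖ ^ 2) := by
    intro t ht
    have ht0 : (0:ℝ) < t := ht
    have hgapsc : gapSum m p (t • V) = t ^ (1 - m) * gapSum m p V := by
      unfold gapSum
      rw [Finset.mul_sum]
      apply Finset.sum_congr rfl
      intro i _
      by_cases h : (i : ℕ) + 1 < p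
      · simp only [dif_pos h, PiLp.smul_apply, smul_eq_mul]
        rw [← mul_sub, Real.mul_rpow ht0.le (hgap i h).le]
      · simp [h]
    have hpairsc : pairSum m p (t • V) = t ^ (1 - m) * pairSum m p V := by
      unfold pairSum
      rw [Finset.mul_sum]
      apply Finset.sum_congr rfl
      intro i _
      rw [Finset.mul_sum]
      apply Finset.sum_congr rfl
      intro j _
      by_cases h : i ≠ j
      · simp only [if_pos h, PiLp.smul_apply, smul_eq_mul]
        rw [← mul_sub, abs_mul, abs_of_pos ht0, Real.mul_rpow ht0.le (abs_nonneg _)]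
      · simp [h]
    have hnormsc : ‖t • V‖ ^ 2 = t ^ 2 * ‖V‖ ^ 2 := by
      rw [norm_smul, Real.norm_eq_abs, mul_pow, sq_abs]
    unfold FFa FF
    rw [hgapsc, hpairsc, hnormsc]
    ring
  have hform : HasDerivAt (fun t : ℝ => t ^ (1 - m) * FF m χ p V
      + t ^ 2 * (α / 2 * ‖V‖ ^ 2))
      ((1 - m) * FF m χ p V + 2 * (α / 2 * ‖V‖ ^ 2)) 1 := by
    have hr1 : HasDerivAt (fun t : ℝ => t ^ (1 - m)) (1 - m) 1 := by
      have := Real.hasDerivAt_rpow_const (x := 1) (p := 1 - m) (Or.inl one_ne_zero)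
      simpa using this
    have hr2 : HasDerivAt (fun t : ℝ => t ^ 2) 2 1 := by
      simpa using hasDerivAt_pow 2 (1:ℝ)
    exact (hr1.mul_const _).add (hr2.mul_const _)
  have h2 : HasDerivAt (fun t : ℝ => FFa m χ α p (t • V))
      ((1 - m) * FF m χ p V + 2 * (α / 2 * ‖V‖ ^ 2)) 1 := by
    apply hform.congr_of_eventuallyEq
    filter_upwards [isOpen_Ioi.mem_nhds (show (1:ℝ) ∈ Set.Ioi 0 by norm_num)] with t ht
    exact heq t ht
  have huniq : (0:ℝ) = (1 - m) * FF m χ p V + 2 * (α / 2 * ‖V‖ ^ 2) := h1.unique h2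
  have hnA : (1 - m) * FF m χ p V < 0 := mul_neg_of_neg_of_pos (by linarith) hFF
  have hnB : α * ‖V‖ ^ 2 ≤ 0 := mul_nonpos_of_nonpos_of_nonneg hα (sq_nonneg _)
  nlinarith
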